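/- Suppose g : {0,…,S} × ℕ → ℝ is non-decreasing in s and non-increasing in n. Then for any s, n < N, and any k with n+1 ≤ n+k ≤ N: ∑_{š=s}^{S} p_k(š|s) · g(š, n+1) ≥ ∑_{s̃=s}^{S} p_1(s̃|s) · g(s̃, n+1), where p_k denotes the k-step binomial transition kernel p_k(š|s) = C(S-s, š-s)(1-q^k)^(š-s)(q^k)^(S-š) with q = 1-p. -/
import Mathlib

lemma pascal_step (m : ℕ) (r : ℝ) (f : ℕ → ℝ) :
    ∑ i ∈ Finset.range (m+2), (((m+1).choose i : ℝ) * r^i * (1-r)^(m+1-i)) * f i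
      = r * ∑ i ∈ Finset.range (m+1), ((m.choose i : ℝ) * r^i * (1-r)^(m-i)) * f (i+1)
      + (1-r) * ∑ i ∈ Finset.range (m+1), ((m.choose i : ℝ) * r^i * (1-r)^(m-i)) * f i := by
  rw [Finset.sum_range_succ' _ (m+1)]
  have h1 : ∀ i ∈ Finset.range (m+1),
      (((m+1).choose (i+1) : ℝ) * r^(i+1) * (1-r)^(m+1-(i+1))) * f (i+1)
      = ((m.choose i : ℝ) * r^i * (1-r)^(m-i)) * f (i+1) * r
        + ((m.choose (i+1) : ℝ) * r^(i+1) * (1-r)^(m-i)) * f (i+1) := by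
    intro i hi
    have : (m+1).choose (i+1) = m.choose i + m.choose (i+1) := Nat.choose_succ_succ m i
    rw [this]
    have : m + 1 - (i+1) = m - i := by omega
    rw [this]
    push_cast
    ring
  rw [Finset.sum_congr rfl h1, Finset.sum_add_distrib]
  have h2 : ∑ i ∈ Finset.range (m+1), ((m.choose i : ℝ) * r^i * (1-r)^(m-i)) * f (i+1) * r
      = r * ∑ i ∈ Finset.range (m+1), ((m.choose i : ℝ) * r^i * (1-r)^(m-i)) * f (i+1) := by
    rw [Finset.mul_sum]; exact Finset.sum_congr rfl (fun i _ => by ring)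
  have h3 : (∑ i ∈ Finset.range (m+1), ((m.choose (i+1) : ℝ) * r^(i+1) * (1-r)^(m-i)) * f (i+1))
        + (((m+1).choose 0 : ℝ) * r^0 * (1-r)^(m+1-0)) * f 0
      = (1-r) * ∑ i ∈ Finset.range (m+1), ((m.choose i : ℝ) * r^i * (1-r)^(m-i)) * f i := by
    rw [Finset.sum_range_succ, Finset.mul_sum, Finset.sum_range_succ' _ m]
    have hlast : ((m.choose (m+1) : ℝ) * r^(m+1) * (1-r)^(m-m)) * f (m+1) = 0 := by
      rw [Nat.choose_succ_self]; push_cast; ring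
    rw [hlast]
    have hterms : ∀ i ∈ Finset.range m,
        ((m.choose (i+1) : ℝ) * r^(i+1) * (1-r)^(m-i)) * f (i+1)
        = (1-r) * (((m.choose (i+1) : ℝ) * r^(i+1) * (1-r)^(m-(i+1))) * f (i+1)) := by
      intro i hi
      have hi' : i < m := Finset.mem_range.mp hi
      have : m - i = (m - (i+1)) + 1 := by omega
      rw [this, pow_succ]
      ring
    rw [Finset.sum_congr rfl hterms]
    simp only [Nat.choose_zero_right, Nat.cast_one, pow_zero, Nat.sub_zero, one_mul, mul_one]
    ring
  rw [h2, ← h3]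
  ring

lemma binom_exp_mono : ∀ (m : ℕ) (f : ℕ → ℝ), (∀ i, f i ≤ f (i+1)) →
    ∀ r1 r2 : ℝ, 0 ≤ r1 → r1 ≤ r2 → r2 ≤ 1 →
    ∑ i ∈ Finset.range (m+1), ((m.choose i : ℝ) * r1^i * (1-r1)^(m-i)) * f i
      ≤ ∑ i ∈ Finset.range (m+1), ((m.choose i : ℝ) * r2^i * (1-r2)^(m-i)) * f i := by
  intro m
  induction m with
  | zero => intro f hf r1 r2 _ _ _; simp
  | succ m ih =>
    intro f hf r1 r2 h0 h12 h21
    have hr10 : 0 ≤ r1 := h0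
    have hr20 : 0 ≤ r2 := le_trans h0 h12
    have hr11 : r1 ≤ 1 := le_trans h12 h21
    rw [show m + 1 + 1 = m + 2 from rfl, pascal_step m r1 f, pascal_step m r2 f]
    set A1 := ∑ i ∈ Finset.range (m+1), ((m.choose i : ℝ) * r1^i * (1-r1)^(m-i)) * f (i+1) with hA1
    set B1 := ∑ i ∈ Finset.range (m+1), ((m.choose i : ℝ) * r1^i * (1-r1)^(m-i)) * f i with hB1
    set A2 := ∑ i ∈ Finset.range (m+1), ((m.choose i : ℝ) * r2^i * (1-r2)^(m-i)) * f (i+1) with hA2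
    set B2 := ∑ i ∈ Finset.range (m+1), ((m.choose i : ℝ) * r2^i * (1-r2)^(m-i)) * f i with hB2
    have hAA : A1 ≤ A2 := ih (fun i => f (i+1)) (fun i => hf (i+1)) r1 r2 h0 h12 h21
    have hBB : B1 ≤ B2 := ih f hf r1 r2 h0 h12 h21
    have hBA : B1 ≤ A1 := by
      apply Finset.sum_le_sum
      intro i _
      have hc : 0 ≤ (m.choose i : ℝ) * r1^i * (1-r1)^(m-i) :=
        mul_nonneg (mul_nonneg (Nat.cast_nonneg _) (pow_nonneg hr10 _))
          (pow_nonneg (by linarith) _)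
      exact mul_le_mul_of_nonneg_left (hf i) hc
    nlinarith [mul_le_mul_of_nonneg_left hAA hr20,
      mul_le_mul_of_nonneg_left hBB (by linarith : (0:ℝ) ≤ 1 - r2),
      mul_le_mul_of_nonneg_left hBA (by linarith : (0:ℝ) ≤ r2 - r1)]

theorem k_step_expectation_ge_one_step (S s n N k : ℕ) (hs : s ≤ S)
    (hnN : n < N) (hk : 1 ≤ k) (hkN : n + k ≤ N)
    (p : ℝ) (hp0 : 0 ≤ p) (hp1 : p ≤ 1) (g : ℕ → ℕ → ℝ)
    (hg1 : ∀ m : ℕ, ∀ a b : ℕ, a ≤ b → g a m ≤ g b m)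
    (hg2 : ∀ a : ℕ, ∀ m m' : ℕ, m ≤ m' → g a m' ≤ g a m) :
    ∑ t ∈ Finset.Icc s S,
        (((S - s).choose (t - s) : ℝ) * (1 - (1 - p) ^ k) ^ (t - s)
          * ((1 - p) ^ k) ^ (S - t)) * g t (n + 1)
      ≥ ∑ t ∈ Finset.Icc s S,
        (((S - s).choose (t - s) : ℝ) * (1 - (1 - p) ^ 1) ^ (t - s)
          * ((1 - p) ^ 1) ^ (S - t)) * g t (n + 1) := by
  have hq0 : (0:ℝ) ≤ 1 - p := by linarith
  have hq1 : (1:ℝ) - p ≤ 1 := by linarith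
  have hred : S + 1 - s = (S - s) + 1 := by omega
  rw [ge_iff_le, ← Finset.Ico_add_one_right_eq_Icc, Finset.sum_Ico_eq_sum_range,
    Finset.sum_Ico_eq_sum_range, hred]
  have hsub : ∀ i, s + i - s = i := fun i => by omega
  have hsub2 : ∀ i, S - (s + i) = S - s - i := fun i => by omega
  simp only [hsub, hsub2]
  have key := binom_exp_mono (S - s) (fun i => g (s + i) (n+1))
    (fun i => hg1 (n+1) (s+i) (s+(i+1)) (by omega))
    (1 - (1-p)^1) (1 - (1-p)^k)
    (by rw [pow_one]; linarith)
    (by have : (1 - p)^k ≤ (1 - p)^1 := pow_le_pow_of_le_one hq0 hq1 hk; linarith)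
    (by have : (0:ℝ) ≤ (1-p)^k := pow_nonneg hq0 k; linarith)
  simp only [sub_sub_cancel] at key
  exact key
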